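/- Let G = ⟨V, E, w⟩ be a bipartite mean-payoff game, i.e., E ⊆ V_Max × V_Min ∪ V_Min × V_Max. Let G' be the MCR game obtained from G by adding a fresh target vertex t, edges (v, t) of weight 0 for every v ∈ V_Min, and the self-loop (t, t) of weight 0. Then for every vertex v ∈ V: Val_G(v) < 0 if and only if Val_{G'}(v) = −∞. -/

import Mathlib

open Filter

/-- A two-player turn-based weighted game graph. `owner v = true` means that
vertex `v` belongs to player Max, `owner v = false` that it belongs to player Min.
Every vertex has at least one successor. -/
structure Game (V : Type) where
  owner : V → Bool
  E : V → V → Prop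
  nonempty : ∀ v, ∃ v', E v v'
  w : V → V → ℤ

namespace Game

variable {V : Type}

/-- The (reversed) history of the first `k` vertices of `π` (most recent first). -/
def hist (π : ℕ → V) (k : ℕ) : List V := (List.ofFn fun i : Fin k => π i).reverse

/-- A strategy: given the (reversed) list of previously visited vertices and the current
vertex, it picks a successor of the current vertex. -/
structure Strategy (g : Game V) where
  next : List V → V → V
  valid : ∀ h v, g.E v (next h v)

/-- A memoryless strategy only depends on the current vertex. -/
def Strategy.Memoryless {g : Game V} (s : g.Strategy) : Prop :=
  ∀ h h' v, s.next h v = s.next h' v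

/-- A finite-memory strategy is one encoded by a deterministic Moore machine
`⟨M, m0, up, dec⟩`: the choice after a finite play is `dec` applied to the memory state
reached by reading the play (the initial vertex is not read) and to the last vertex. -/
def Strategy.FiniteMemory {g : Game V} (s : g.Strategy) : Prop :=
  ∃ (M : Type) (_ : Fintype M) (m0 : M) (up : M → V → M) (dec : M → V → V),
    ∀ h v, s.next h v = dec (List.foldl up m0 (((h.reverse ++ [v]).drop 1))) v

variable (g : Game V)

/-- Next vertex chosen by the owner of the current vertex. -/
def step (σ τ : g.Strategy) (h : List V) (v : V) : V :=
  if g.owner v then σ.next h v else τ.next h v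

/-- Current vertex and reversed history after `k` steps of the play `Play(v, σ, τ)`. -/
def playAux (σ τ : g.Strategy) (v : V) : ℕ → V × List V
  | 0 => (v, [])
  | k+1 =>
      let p := playAux σ τ v k
      (g.step σ τ p.2 p.1, p.1 :: p.2)

/-- `Play(v, σ, τ)`: the unique play starting in `v` and conforming to the
strategy `σ` of Max and the strategy `τ` of Min. -/
def play (σ τ : g.Strategy) (v : V) (k : ℕ) : V := (g.playAux σ τ v k).1

/-- An infinite sequence of vertices is a play when consecutive vertices are linked
by edges. -/
def IsPlay (π : ℕ → V) : Prop := ∀ k, g.E (π k) (π (k+1))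

/-- A play conforms to a strategy `s` of the player `p` if, whenever the current vertex
belongs to `p`, the next vertex is the one prescribed by `s`. -/
def Conforms (p : Bool) (s : g.Strategy) (π : ℕ → V) : Prop :=
  ∀ k, g.owner (π k) = p → π (k+1) = s.next (hist π k) (π k)

/-- Total-payoff of the prefix of length `k`: the sum of the first `k` edge weights. -/
def TPfin (π : ℕ → V) (k : ℕ) : ℤ := ∑ i ∈ Finset.range k, g.w (π i) (π (i+1))

/-- Total payoff of an infinite play: `liminf` of the payoffs of its prefixes. -/
noncomputable def TP (π : ℕ → V) : EReal :=
  liminf (fun k => (((g.TPfin π k : ℤ) : ℝ) : EReal)) atTop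

/-- Mean payoff of an infinite play. -/
noncomputable def MP (π : ℕ → V) : EReal :=
  liminf (fun k => ((((g.TPfin π k : ℤ) : ℝ) / (k : ℝ)) : EReal)) atTop

open Classical in
/-- Min-cost reachability payoff with target `t`: total payoff up to the first visit
of `t`, and `+∞` if `t` is never visited. -/
noncomputable def MCR (t : V) (π : ℕ → V) : EReal :=
  if h : ∃ k, π k = t then (((g.TPfin π (Nat.find h) : ℤ) : ℝ) : EReal) else ⊤

open Classical in
/-- `MCR` payoff restricted to reaching the target among the first `i+1` vertices. -/
noncomputable def MCRbd (t : V) (i : ℕ) (π : ℕ → V) : EReal :=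
  if ∃ k ≤ i, π k = t then g.MCR t π else ⊤

/-- Value of a strategy `σ` of Max from `v` : `inf_τ P(Play(v, σ, τ))`. -/
noncomputable def valMax (P : (ℕ → V) → EReal) (v : V) (σ : g.Strategy) : EReal :=
  ⨅ τ : g.Strategy, P (g.play σ τ v)

/-- Value of a strategy `τ` of Min from `v` : `sup_σ P(Play(v, σ, τ))`. -/
noncomputable def valMin (P : (ℕ → V) → EReal) (v : V) (τ : g.Strategy) : EReal :=
  ⨆ σ : g.Strategy, P (g.play σ τ v)

/-- Lower value `Val⁻(v) = sup_σ inf_τ P(Play(v, σ, τ))`. -/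
noncomputable def lowerVal (P : (ℕ → V) → EReal) (v : V) : EReal :=
  ⨆ σ : g.Strategy, g.valMax P v σ

/-- Upper value `Val⁺(v) = inf_τ sup_σ P(Play(v, σ, τ))`. -/
noncomputable def upperVal (P : (ℕ → V) → EReal) (v : V) : EReal :=
  ⨅ τ : g.Strategy, g.valMin P v τ

end Game

/-- A min-cost reachability game: a game together with a target vertex `t` whose only
outgoing edge is a self-loop of weight `0`. -/
structure MCRGame (V : Type) extends Game V where
  t : V
  loop : E t t
  loopOnly : ∀ v, E t v → v = t
  loopZero : w t t = 0

/-- The value of a (determined) MCR game. -/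
noncomputable def MCRGame.Val {V : Type} (G : MCRGame V) : V → EReal :=
  fun v => G.toGame.lowerVal (G.toGame.MCR G.t) v

/-- The `i`-step value `val_i(v) = inf_τ sup_σ MCR_i(Play(v, σ, τ))`. -/
noncomputable def MCRGame.ival {V : Type} (G : MCRGame V) (i : ℕ) : V → EReal :=
  fun v => G.toGame.upperVal (G.toGame.MCRbd G.t i) v

/-- The MCR game obtained from a mean-payoff game by adding a fresh target vertex
(`none`), edges of weight `0` from every Min vertex to the target, and a zero
self-loop on the target. -/
def mcrOf {V : Type} (g : Game V) : MCRGame (Option V) where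
  owner x := match x with
    | none => true
    | some v => g.owner v
  E x y := match x, y with
    | some v, some v' => g.E v v'
    | some v, none => g.owner v = false
    | none, y => y = none
  nonempty x := by
    match x with
    | none => exact ⟨none, rfl⟩
    | some v =>
        obtain ⟨v', h⟩ := g.nonempty v
        exact ⟨some v', h⟩
  w x y := match x, y with
    | some v, some v' => g.w v v'
    | _, _ => 0
  t := none
  loop := rfl
  loopOnly := fun _ h => h
  loopZero := rfl
namespace Game

open Classical

variable {V : Type} (g : Game V)

noncomputable def someSucc (v : V) : V := Classical.choose (g.nonempty v)

lemma someSucc_spec (v : V) : g.E v (g.someSucc v) := Classical.choose_spec (g.nonempty v)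

noncomputable instance : Nonempty g.Strategy :=
  ⟨⟨fun _ v => g.someSucc v, fun _ v => g.someSucc_spec v⟩⟩

@[simp] lemma play_zero (σ τ : g.Strategy) (v : V) : g.play σ τ v 0 = v := rfl

lemma playAux_snd (σ τ : g.Strategy) (v : V) (k : ℕ) :
    (g.playAux σ τ v k).2 = hist (g.play σ τ v) k := by
  induction k with
  | zero => simp [playAux, hist]
  | succ k ih =>
      show (g.play σ τ v k) :: (g.playAux σ τ v k).2 = _
      rw [ih]
      show _ = (List.ofFn fun i : Fin (k+1) => g.play σ τ v i).reverse
      rw [List.ofFn_succ']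
      simp [hist, List.concat_eq_append]

lemma play_succ (σ τ : g.Strategy) (v : V) (k : ℕ) :
    g.play σ τ v (k+1) = g.step σ τ (hist (g.play σ τ v) k) (g.play σ τ v k) := by
  show (g.playAux σ τ v (k+1)).1 = _
  rw [show (g.playAux σ τ v (k+1)).1 = g.step σ τ (g.playAux σ τ v k).2 (g.playAux σ τ v k).1 from rfl,
    playAux_snd]
  rfl

lemma play_edge (σ τ : g.Strategy) (v : V) (k : ℕ) :
    g.E (g.play σ τ v k) (g.play σ τ v (k+1)) := by
  rw [play_succ]
  unfold step
  by_cases h : g.owner (g.play σ τ v k) <;> simp [h, Strategy.valid]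

lemma play_max (σ τ : g.Strategy) (v : V) (k : ℕ) (h : g.owner (g.play σ τ v k) = true) :
    g.play σ τ v (k+1) = σ.next (hist (g.play σ τ v) k) (g.play σ τ v k) := by
  rw [play_succ]; unfold step; simp [h]

lemma play_min (σ τ : g.Strategy) (v : V) (k : ℕ) (h : g.owner (g.play σ τ v k) = false) :
    g.play σ τ v (k+1) = τ.next (hist (g.play σ τ v) k) (g.play σ τ v k) := by
  rw [play_succ]; unfold step; simp [h]

@[simp] lemma TPfin_zero (π : ℕ → V) : g.TPfin π 0 = 0 := by simp [TPfin]

lemma TPfin_succ (π : ℕ → V) (k : ℕ) :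
    g.TPfin π (k+1) = g.TPfin π k + g.w (π k) (π (k+1)) := by
  simp [TPfin, Finset.sum_range_succ]

/-- forward tail list of a play -/
def ptl (π : ℕ → V) (k : ℕ) : List V := List.ofFn fun i : Fin k => π (i+1)

lemma ptl_succ (π : ℕ → V) (k : ℕ) : ptl π (k+1) = ptl π k ++ [π (k+1)] := by
  show List.ofFn (fun i : Fin (k+1) => π (i+1)) = _
  rw [List.ofFn_succ']
  simp [ptl, List.concat_eq_append]

lemma hist_forward (π : ℕ → V) (k : ℕ) :
    (hist π k).reverse ++ [π k] = π 0 :: ptl π k := by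
  have : (hist π k).reverse ++ [π k] = List.ofFn fun i : Fin (k+1) => π i := by
    rw [List.ofFn_succ']
    simp [hist, List.concat_eq_append]
  rw [this, List.ofFn_succ]
  rfl

variable [Fintype V]

/-- a bound on absolute values of weights -/
noncomputable def Wb : ℕ := Finset.univ.sup fun p : V × V => (g.w p.1 p.2).natAbs

lemma w_le_Wb (a b : V) : |g.w a b| ≤ (g.Wb : ℤ) := by
  have : (g.w a b).natAbs ≤ g.Wb := Finset.le_sup (f := fun p : V × V => (g.w p.1 p.2).natAbs)
    (Finset.mem_univ (a, b))
  rw [Int.abs_eq_natAbs]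
  exact_mod_cast this

lemma w_le_Wb' (a b : V) : g.w a b ≤ (g.Wb : ℤ) := le_trans (le_abs_self _) (g.w_le_Wb a b)

lemma neg_Wb_le_w (a b : V) : -(g.Wb : ℤ) ≤ g.w a b := (abs_le.mp (g.w_le_Wb a b)).1

end Game
namespace Game

open Classical

variable {V : Type} (g : Game V)

/-- Min's attractor (with `n` a bound on the number of steps) towards the set of
"configurations" `(u, c)` (vertex, accumulated payoff) satisfying `T`. -/
def attr (T : V → ℤ → Prop) : ℕ → V → ℤ → Prop
  | 0, u, c => T u c
  | n+1, u, c => attr T n u c ∨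
      ((g.owner u = false ∧ ∃ u', g.E u u' ∧ attr T n u' (c + g.w u u')) ∨
       (g.owner u = true ∧ ∀ u', g.E u u' → attr T n u' (c + g.w u u')))

lemma attr_mono_succ (T : V → ℤ → Prop) (n : ℕ) (u : V) (c : ℤ) (h : g.attr T n u c) :
    g.attr T (n+1) u c := Or.inl h

lemma attr_mono (T : V → ℤ → Prop) {m n : ℕ} (hmn : m ≤ n) {u : V} {c : ℤ}
    (h : g.attr T m u c) : g.attr T n u c := by
  induction n with
  | zero => exact (Nat.le_zero.mp hmn) ▸ h
  | succ n ih =>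
      rcases Nat.lt_or_ge m (n+1) with h' | h'
      · exact Or.inl (ih (Nat.lt_succ_iff.mp h'))
      · exact (le_antisymm hmn h') ▸ h

lemma attr_mono_T {T T' : V → ℤ → Prop} (hT : ∀ u c, T u c → T' u c) (n : ℕ)
    {u : V} {c : ℤ} (h : g.attr T n u c) : g.attr T' n u c := by
  induction n generalizing u c with
  | zero => exact hT u c h
  | succ n ih =>
      rcases h with h | ⟨ho, u', he, ha⟩ | ⟨ho, hall⟩
      · exact Or.inl (ih h)
      · exact Or.inr (Or.inl ⟨ho, u', he, ih ha⟩)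
      · exact Or.inr (Or.inr ⟨ho, fun u' he => ih (hall u' he)⟩)

def inAttr (T : V → ℤ → Prop) (u : V) (c : ℤ) : Prop := ∃ n, g.attr T n u c

lemma inAttr_of_T {T : V → ℤ → Prop} {u : V} {c : ℤ} (h : T u c) : g.inAttr T u c := ⟨0, h⟩

lemma not_T_of_not_inAttr {T : V → ℤ → Prop} {u : V} {c : ℤ} (h : ¬ g.inAttr T u c) :
    ¬ T u c := fun ht => h ⟨0, ht⟩

/-- outside the attractor, all moves of Min stay outside. -/
lemma not_inAttr_min {T : V → ℤ → Prop} {u : V} {c : ℤ} (ho : g.owner u = false)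
    (h : ¬ g.inAttr T u c) : ∀ u', g.E u u' → ¬ g.inAttr T u' (c + g.w u u') := by
  intro u' he ⟨n, ha⟩
  exact h ⟨n+1, Or.inr (Or.inl ⟨ho, u', he, ha⟩)⟩

/-- outside the attractor, Max has a move staying outside (finite branching). -/
lemma not_inAttr_max [Fintype V] {T : V → ℤ → Prop} {u : V} {c : ℤ} (ho : g.owner u = true)
    (h : ¬ g.inAttr T u c) : ∃ u', g.E u u' ∧ ¬ g.inAttr T u' (c + g.w u u') := by
  by_contra hc
  push_neg at hc
  have hex : ∀ u' : V, ∃ n, g.E u u' → g.attr T n u' (c + g.w u u') := by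
    intro u'
    by_cases he : g.E u u'
    · obtain ⟨n, hn⟩ := hc u' he
      exact ⟨n, fun _ => hn⟩
    · exact ⟨0, fun h' => absurd h' he⟩
  choose f hf using hex
  set N := Finset.univ.sup f with hN
  refine h ⟨N + 1, Or.inr (Or.inr ⟨ho, fun u' he => ?_⟩)⟩
  exact g.attr_mono T (Finset.le_sup (Finset.mem_univ u')) (hf u' he)

/-- rank of a configuration in the attractor -/
noncomputable def rank {T : V → ℤ → Prop} {u : V} {c : ℤ} (h : g.inAttr T u c) : ℕ :=
  Nat.find h

lemma rank_pos {T : V → ℤ → Prop} {u : V} {c : ℤ} (h : g.inAttr T u c) (hT : ¬ T u c) :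
    0 < g.rank h := by
  rcases Nat.eq_zero_or_pos (Nat.find h) with h' | h'
  · have hs := Nat.find_spec h
    rw [h'] at hs
    exact absurd hs hT
  · exact h' 

lemma rank_min_step {T : V → ℤ → Prop} {u : V} {c : ℤ} (ho : g.owner u = false)
    (h : g.inAttr T u c) (hT : ¬ T u c) :
    ∃ u', g.E u u' ∧ ∃ h' : g.inAttr T u' (c + g.w u u'), g.rank h' < g.rank h := by
  obtain ⟨m, hm⟩ : ∃ m, Nat.find h = m + 1 :=
    ⟨Nat.find h - 1, by have := g.rank_pos h hT; unfold rank at this; omega⟩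
  have hspec : g.attr T (m+1) u c := hm ▸ Nat.find_spec h
  have hmin : ¬ g.attr T m u c := Nat.find_min h (m := m) (by omega)
  rcases hspec with h' | ⟨_, u', he, ha⟩ | ⟨ho', _⟩
  · exact absurd h' hmin
  · refine ⟨u', he, ⟨m, ha⟩, ?_⟩
    have hle : Nat.find (⟨m, ha⟩ : g.inAttr T u' (c + g.w u u')) ≤ m := Nat.find_le ha
    show Nat.find _ < Nat.find h
    omega
  · rw [ho] at ho'
    exact absurd ho' (by simp)

lemma rank_max_step {T : V → ℤ → Prop} {u : V} {c : ℤ} (ho : g.owner u = true)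
    (h : g.inAttr T u c) (hT : ¬ T u c) :
    ∀ u', g.E u u' → ∃ h' : g.inAttr T u' (c + g.w u u'), g.rank h' < g.rank h := by
  intro u' he
  obtain ⟨m, hm⟩ : ∃ m, Nat.find h = m + 1 :=
    ⟨Nat.find h - 1, by have := g.rank_pos h hT; unfold rank at this; omega⟩
  have hspec : g.attr T (m+1) u c := hm ▸ Nat.find_spec h
  have hmin : ¬ g.attr T m u c := Nat.find_min h (m := m) (by omega)
  rcases hspec with h' | ⟨ho', _⟩ | ⟨_, hall⟩
  · exact absurd h' hmin
  · rw [ho] at ho'; exact absurd ho' (by simp)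
  · refine ⟨⟨m, hall u' he⟩, ?_⟩
    have hle : Nat.find (⟨m, hall u' he⟩ : g.inAttr T u' (c + g.w u u')) ≤ m := Nat.find_le (hall u' he)
    show Nat.find _ < Nat.find h
    omega

lemma rank_congr {T : V → ℤ → Prop} {u u' : V} {c c' : ℤ} (hu : u = u') (hc : c = c')
    (h1 : g.inAttr T u c) (h2 : g.inAttr T u' c') : g.rank h1 = g.rank h2 := by
  subst hu; subst hc; rfl

lemma rank_le {T : V → ℤ → Prop} {u : V} {c : ℤ} (h : g.inAttr T u c) {n : ℕ}
    (hn : g.attr T n u c) : g.rank h ≤ n := Nat.find_le hn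

end Game
namespace Game

open Classical

variable {V : Type}

/-- target: configurations in `Y` with payoff at most `-1`. -/
def TZ (_g : Game V) (Y : Set V) : V → ℤ → Prop := fun u c => u ∈ Y ∧ c ≤ -1

variable (g : Game V)

/-- the operator whose greatest fixed point is the set of vertices from which Min can
force repeated drops of the total payoff. -/
def phi : Set V →o Set V where
  toFun Y := {u | g.inAttr (g.TZ Y) u 0}
  monotone' := by
    intro Y Y' hYY' u hu
    obtain ⟨n, hn⟩ := hu
    exact ⟨n, g.attr_mono_T (fun a c h => ⟨hYY' h.1, h.2⟩) n hn⟩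

def Zset : Set V := OrderHom.gfp g.phi

lemma Zset_fixed : g.phi g.Zset = g.Zset := g.phi.isFixedPt_gfp

lemma Zset_attr {u : V} (hu : u ∈ g.Zset) : g.inAttr (g.TZ g.Zset) u 0 := by
  rw [← g.Zset_fixed] at hu
  exact hu

/-- the decreasing approximation chain -/
def Yc : ℕ → Set V
  | 0 => Set.univ
  | i+1 => Yc i ∩ g.phi (Yc i)

lemma Yc_antitone : Antitone g.Yc :=
  antitone_nat_of_succ_le fun _ => Set.inter_subset_left

lemma Zset_subset_Yc (i : ℕ) : g.Zset ⊆ g.Yc i := by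
  induction i with
  | zero => exact Set.subset_univ _
  | succ i ih =>
      intro u hu
      refine ⟨ih hu, ?_⟩
      have h : u ∈ g.phi g.Zset := by rw [g.Zset_fixed]; exact hu
      exact g.phi.monotone ih h

variable [Fintype V]

lemma Yc_stab : ∃ i, g.Yc (i+1) = g.Yc i := by
  by_contra hc
  push_neg at hc
  have hlt : ∀ i, (g.Yc (i+1)).ncard < (g.Yc i).ncard := fun i =>
    Set.ncard_lt_ncard (Set.ssubset_iff_subset_ne.mpr ⟨Set.inter_subset_left, hc i⟩)
      (Set.toFinite _)
  have hle : ∀ i, (g.Yc i).ncard + i ≤ (g.Yc 0).ncard := by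
    intro i
    induction i with
    | zero => omega
    | succ i ih => have := hlt i; omega
  have := hle ((g.Yc 0).ncard + 1)
  omega

noncomputable def istab : ℕ := Classical.choose g.Yc_stab

lemma Yc_istab : g.Yc g.istab = g.Zset := by
  have h1 : g.Yc (g.istab + 1) = g.Yc g.istab := Classical.choose_spec g.Yc_stab
  have h2 : g.Yc g.istab ⊆ g.phi (g.Yc g.istab) := by
    conv_lhs => rw [← h1]
    exact Set.inter_subset_right
  exact le_antisymm (OrderHom.le_gfp g.phi h2) (g.Zset_subset_Yc g.istab)

/-- the level of a vertex: the largest `j` (up to the stabilization point) with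
`x ∈ Yc j`. -/
noncomputable def lvl (x : V) : ℕ :=
  Nat.findGreatest (fun j => x ∈ g.Yc j) g.istab

lemma lvl_mem (x : V) : x ∈ g.Yc (g.lvl x) := by
  unfold lvl
  exact Nat.findGreatest_spec (P := fun j => x ∈ g.Yc j) (Nat.zero_le _) (Set.mem_univ x)

lemma lvl_le_istab (x : V) : g.lvl x ≤ g.istab := Nat.findGreatest_le _

lemma lvl_lt_istab {x : V} (hx : x ∉ g.Zset) : g.lvl x < g.istab := by
  rcases Nat.lt_or_ge (g.lvl x) g.istab with h | h
  · exact h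
  · exfalso
    have h1 : g.lvl x = g.istab := le_antisymm (g.lvl_le_istab x) h
    have h2 := g.lvl_mem x
    rw [h1, g.Yc_istab] at h2
    exact hx h2

lemma lvl_not_mem_succ {x : V} (hx : x ∉ g.Zset) : x ∉ g.Yc (g.lvl x + 1) := by
  have hlt := g.lvl_lt_istab hx
  exact Nat.findGreatest_is_greatest (P := fun j => x ∈ g.Yc j) (Nat.lt_succ_self _) hlt

lemma not_mem_phi_lvl {x : V} (hx : x ∉ g.Zset) : x ∉ g.phi (g.Yc (g.lvl x)) := by
  intro h
  exact g.lvl_not_mem_succ hx ⟨g.lvl_mem x, h⟩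

omit [Fintype V] in
lemma not_Zset_of_not_Yc {y : V} {j : ℕ} (hy : y ∉ g.Yc j) : y ∉ g.Zset :=
  fun h => hy (g.Zset_subset_Yc j h)

lemma lvl_lt_of_not_mem {y : V} {j : ℕ} (hy : y ∉ g.Yc j) : g.lvl y < j := by
  by_contra h
  push_neg at h
  exact hy (g.Yc_antitone h (g.lvl_mem y))

end Game
namespace Game

open Classical Filter

variable {V : Type} (g : Game V)

open Classical in
/-- bookkeeping along a play: current vertex, total payoff, payoff at the start of the
current phase (a new phase starts whenever the play reaches a configuration in
`TZ Zset`, i.e. a vertex of `Zset` with a relative payoff drop of at least 1). -/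
noncomputable def proc2 (x : V) (l : List V) : V × ℤ × ℤ :=
  l.foldl (fun s y =>
    if g.TZ g.Zset y (s.2.1 + g.w s.1 y - s.2.2)
    then (y, s.2.1 + g.w s.1 y, s.2.1 + g.w s.1 y)
    else (y, s.2.1 + g.w s.1 y, s.2.2)) (x, 0, 0)

open Classical in
lemma proc2_append (x : V) (l : List V) (y : V) :
    g.proc2 x (l ++ [y]) =
      (if g.TZ g.Zset y ((g.proc2 x l).2.1 + g.w (g.proc2 x l).1 y - (g.proc2 x l).2.2)
       then (y, (g.proc2 x l).2.1 + g.w (g.proc2 x l).1 y,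
             (g.proc2 x l).2.1 + g.w (g.proc2 x l).1 y)
       else (y, (g.proc2 x l).2.1 + g.w (g.proc2 x l).1 y, (g.proc2 x l).2.2)) := by
  simp only [proc2, List.foldl_append, List.foldl_cons, List.foldl_nil]
  congr

noncomputable def proc2L (u : V) (l : List V) : V × ℤ × ℤ :=
  match l with
  | [] => (u, 0, 0)
  | x :: r => g.proc2 x r

open Classical in
/-- Min's strategy: repeatedly follow the attractor towards `TZ Zset`. -/
noncomputable def tauStar : g.Strategy where
  next h u :=
    let s := g.proc2L u (h.reverse ++ [u])
    if hc : g.owner u = false ∧ ∃ _hA : g.inAttr (g.TZ g.Zset) u (s.2.1 - s.2.2),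
        ¬ g.TZ g.Zset u (s.2.1 - s.2.2)
    then Classical.choose (g.rank_min_step hc.1 hc.2.choose hc.2.choose_spec)
    else g.someSucc u
  valid h u := by
    dsimp only
    split
    · next hc =>
        exact (Classical.choose_spec (g.rank_min_step hc.1 hc.2.choose hc.2.choose_spec)).1
    · exact g.someSucc_spec u

/-- state along the play against `tauStar` -/
noncomputable def S2 (σ : g.Strategy) (v : V) (k : ℕ) : V × ℤ × ℤ :=
  g.proc2 v (ptl (g.play σ g.tauStar v) k)

lemma S2_zero (σ : g.Strategy) (v : V) : g.S2 σ v 0 = (v, 0, 0) := by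
  simp [S2, ptl, proc2]

lemma S2_succ (σ : g.Strategy) (v : V) (k : ℕ) :
    g.S2 σ v (k+1) =
      (if g.TZ g.Zset (g.play σ g.tauStar v (k+1))
          ((g.S2 σ v k).2.1 + g.w (g.S2 σ v k).1 (g.play σ g.tauStar v (k+1)) - (g.S2 σ v k).2.2)
       then (g.play σ g.tauStar v (k+1),
             (g.S2 σ v k).2.1 + g.w (g.S2 σ v k).1 (g.play σ g.tauStar v (k+1)),
             (g.S2 σ v k).2.1 + g.w (g.S2 σ v k).1 (g.play σ g.tauStar v (k+1)))
       else (g.play σ g.tauStar v (k+1),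
             (g.S2 σ v k).2.1 + g.w (g.S2 σ v k).1 (g.play σ g.tauStar v (k+1)),
             (g.S2 σ v k).2.2)) := by
  rw [S2, ptl_succ, proc2_append]
  rfl

lemma S2_fst (σ : g.Strategy) (v : V) (k : ℕ) : (g.S2 σ v k).1 = g.play σ g.tauStar v k := by
  induction k with
  | zero => rw [S2_zero]; rfl
  | succ k ih => rw [S2_succ]; split <;> rfl

lemma S2_t (σ : g.Strategy) (v : V) (k : ℕ) :
    (g.S2 σ v k).2.1 = g.TPfin (g.play σ g.tauStar v) k := by
  induction k with
  | zero => rw [S2_zero, TPfin_zero]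
  | succ k ih =>
      rw [TPfin_succ, ← ih, ← S2_fst (σ := σ) (v := v) (k := k), S2_succ]
      split <;> rfl

lemma S2_b_le (σ : g.Strategy) (v : V) (k : ℕ) :
    (g.S2 σ v (k+1)).2.2 ≤ (g.S2 σ v k).2.2 := by
  rw [S2_succ]
  split
  · next h => have h2 := h.2; dsimp only; omega
  · rfl

lemma S2_b_mono (σ : g.Strategy) (v : V) {j k : ℕ} (hjk : j ≤ k) :
    (g.S2 σ v k).2.2 ≤ (g.S2 σ v j).2.2 := by
  induction k with
  | zero => rw [Nat.le_zero.mp hjk]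
  | succ k ih =>
      rcases Nat.lt_or_ge j (k+1) with h | h
      · exact le_trans (g.S2_b_le σ v k) (ih (Nat.lt_succ_iff.mp h))
      · rw [le_antisymm hjk h]

/-- relative payoff of the current phase -/
noncomputable def c2 (σ : g.Strategy) (v : V) (k : ℕ) : ℤ :=
  (g.S2 σ v k).2.1 - (g.S2 σ v k).2.2

/-- the key step property: from a configuration in the attractor, the next
configuration along the play is also in the attractor, with smaller rank. -/
lemma step_attr (σ : g.Strategy) (v : V) (k : ℕ)
    (hA : g.inAttr (g.TZ g.Zset) (g.play σ g.tauStar v k) (g.c2 σ v k))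
    (hT : ¬ g.TZ g.Zset (g.play σ g.tauStar v k) (g.c2 σ v k)) :
    ∃ h' : g.inAttr (g.TZ g.Zset) (g.play σ g.tauStar v (k+1))
      (g.c2 σ v k + g.w (g.play σ g.tauStar v k) (g.play σ g.tauStar v (k+1))),
      g.rank h' < g.rank hA := by
  set π := g.play σ g.tauStar v with hπ
  rcases Bool.eq_false_or_eq_true (g.owner (π k)) with ho | ho
  case inl =>
    -- Max's move: arbitrary successor
    have he : g.E (π k) (π (k+1)) := by rw [hπ]; exact g.play_edge σ g.tauStar v k
    exact g.rank_max_step ho hA hT (π (k+1)) he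
  case inr =>
    -- Min's move: given by tauStar
    have hstep : π (k+1) = (g.tauStar).next (hist π k) (π k) := by
      rw [hπ]; exact g.play_min σ g.tauStar v k (by rw [← hπ]; exact ho)
    have hfwd : (hist π k).reverse ++ [π k] = v :: ptl π k := by
      rw [hist_forward]
      rw [hπ]
      rfl
    have hproc : g.proc2L (π k) ((hist π k).reverse ++ [π k]) = g.S2 σ v k := by
      rw [hfwd]; rfl
    have hc : g.owner (π k) = false ∧
        ∃ _hA : g.inAttr (g.TZ g.Zset) (π k) ((g.S2 σ v k).2.1 - (g.S2 σ v k).2.2),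
          ¬ g.TZ g.Zset (π k) ((g.S2 σ v k).2.1 - (g.S2 σ v k).2.2) := ⟨ho, hA, hT⟩
    have hnext : π (k+1) =
        Classical.choose (g.rank_min_step hc.1 hc.2.choose hc.2.choose_spec) := by
      rw [hstep]
      show (g.tauStar).next (hist π k) (π k) = _
      unfold tauStar
      dsimp only
      simp only [hproc]
      rw [dif_pos hc]
    obtain ⟨hE, h', hlt⟩ :=
      Classical.choose_spec (g.rank_min_step hc.1 hc.2.choose hc.2.choose_spec)
    have h2 : g.inAttr (g.TZ g.Zset) (π (k+1)) (g.c2 σ v k + g.w (π k) (π (k+1))) := by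
      rw [hnext]; exact h'
    refine ⟨h2, ?_⟩
    have hcEq : g.c2 σ v k + g.w (π k) (π (k+1)) =
        (g.S2 σ v k).2.1 - (g.S2 σ v k).2.2 + g.w (π k)
          (Classical.choose (g.rank_min_step hc.1 hc.2.choose hc.2.choose_spec)) := by
      rw [← hnext]; rfl
    rw [g.rank_congr hnext hcEq h2 h']
    exact hlt

end Game
namespace Game

open Classical Filter

variable {V : Type} (g : Game V) [Fintype V]

open Classical in
noncomputable def Nst : ℕ :=
  1 + Finset.univ.sup fun u : V =>
    if h : g.inAttr (g.TZ g.Zset) u 0 then g.rank h else 0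

open Classical in
lemma rank_lt_Nst {u : V} (h : g.inAttr (g.TZ g.Zset) u 0) : g.rank h < g.Nst := by
  have hle : (if h' : g.inAttr (g.TZ g.Zset) u 0 then g.rank h' else 0) ≤
      Finset.univ.sup (fun u : V => if h' : g.inAttr (g.TZ g.Zset) u 0 then g.rank h' else 0) :=
    Finset.le_sup (f := fun u : V => if h' : g.inAttr (g.TZ g.Zset) u 0 then g.rank h' else 0)
      (Finset.mem_univ u)
  rw [dif_pos h] at hle
  unfold Nst
  omega

lemma Nst_pos : 0 < g.Nst := by unfold Nst; omega

/-- the main invariant for part B2 -/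
def Pinv (u : V) (c : ℤ) : Prop :=
  ∃ hA : g.inAttr (g.TZ g.Zset) u c,
    ¬ g.TZ g.Zset u c ∧ g.rank hA < g.Nst ∧
    c + (g.Wb : ℤ) * (g.rank hA : ℤ) ≤ (g.Wb : ℤ) * ((g.Nst : ℤ) - 1)

lemma Pinv_congr {u u' : V} {c c' : ℤ} (hu : u = u') (hc : c = c') (h : g.Pinv u c) :
    g.Pinv u' c' := by subst hu; subst hc; exact h

lemma Pinv_Zset {u : V} (hu : u ∈ g.Zset) : g.Pinv u 0 := by
  refine ⟨g.Zset_attr hu, fun h => absurd h.2 (by omega), g.rank_lt_Nst _, ?_⟩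
  have h1 : (g.rank (g.Zset_attr hu) : ℤ) ≤ (g.Nst : ℤ) - 1 := by
    have := g.rank_lt_Nst (g.Zset_attr hu); omega
  have hW : (0:ℤ) ≤ (g.Wb:ℤ) := Int.natCast_nonneg _
  have := mul_le_mul_of_nonneg_left h1 hW
  omega

lemma c2_zero (σ : g.Strategy) (v : V) : g.c2 σ v 0 = 0 := by
  rw [c2, S2_zero]
  simp

lemma Pinv_step (σ : g.Strategy) (v : V) (k : ℕ)
    (h : g.Pinv (g.play σ g.tauStar v k) (g.c2 σ v k)) :
    g.Pinv (g.play σ g.tauStar v (k+1)) (g.c2 σ v (k+1)) := by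
  obtain ⟨hA, hT, hrk, hbd⟩ := h
  obtain ⟨h', hlt⟩ := g.step_attr σ v k hA hT
  have hS := g.S2_succ σ v k
  by_cases hres : g.TZ g.Zset (g.play σ g.tauStar v (k+1))
      ((g.S2 σ v k).2.1 + g.w (g.S2 σ v k).1 (g.play σ g.tauStar v (k+1)) - (g.S2 σ v k).2.2)
  · have hc' : g.c2 σ v (k+1) = 0 := by
      rw [c2, hS, if_pos hres]
      dsimp only
      omega
    exact g.Pinv_congr rfl hc'.symm (g.Pinv_Zset hres.1)
  · have hc' : g.c2 σ v (k+1) =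
        g.c2 σ v k + g.w (g.play σ g.tauStar v k) (g.play σ g.tauStar v (k+1)) := by
      rw [c2, hS, if_neg hres, c2]
      dsimp only
      rw [S2_fst]
      ring
    have hT' : ¬ g.TZ g.Zset (g.play σ g.tauStar v (k+1))
        (g.c2 σ v k + g.w (g.play σ g.tauStar v k) (g.play σ g.tauStar v (k+1))) := by
      intro hcon
      apply hres
      rw [S2_fst, S2_t]
      have : (g.S2 σ v k).2.1 = g.TPfin (g.play σ g.tauStar v) k := g.S2_t σ v k
      refine ⟨hcon.1, ?_⟩
      have h2 := hcon.2
      rw [c2] at h2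
      rw [S2_t] at h2
      omega
    refine g.Pinv_congr rfl hc'.symm ⟨h', hT', lt_trans hlt hrk, ?_⟩
    have hw := g.w_le_Wb' (g.play σ g.tauStar v k) (g.play σ g.tauStar v (k+1))
    have hr1 : (g.rank h' : ℤ) + 1 ≤ (g.rank hA : ℤ) := by exact_mod_cast hlt
    have hW : (0:ℤ) ≤ (g.Wb:ℤ) := Int.natCast_nonneg _
    have := mul_le_mul_of_nonneg_left hr1 hW
    nlinarith [hbd]

lemma main2 (σ : g.Strategy) {v : V} (hv : v ∈ g.Zset) (k : ℕ) :
    g.Pinv (g.play σ g.tauStar v k) (g.c2 σ v k) := by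
  induction k with
  | zero =>
      exact g.Pinv_congr (g.play_zero σ g.tauStar v).symm (g.c2_zero σ v).symm (g.Pinv_Zset hv)
  | succ k ih => exact g.Pinv_step σ v k ih

open Classical in
/-- rank as a plain function -/
noncomputable def rnk (u : V) (c : ℤ) : ℕ :=
  if h : g.inAttr (g.TZ g.Zset) u c then g.rank h else 0

open Classical in
lemma rnk_eq {u : V} {c : ℤ} (h : g.inAttr (g.TZ g.Zset) u c) : g.rnk u c = g.rank h := by
  rw [rnk, dif_pos h]

/-- if no reset happens at step `k+1`, the rank strictly decreases. -/
lemma rnk_step (σ : g.Strategy) {v : V} (hv : v ∈ g.Zset) (k : ℕ)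
    (hb : (g.S2 σ v (k+1)).2.2 = (g.S2 σ v k).2.2) :
    g.rnk (g.play σ g.tauStar v (k+1)) (g.c2 σ v (k+1)) <
      g.rnk (g.play σ g.tauStar v k) (g.c2 σ v k) := by
  obtain ⟨hA, hT, hrk, hbd⟩ := g.main2 σ hv k
  obtain ⟨h', hlt⟩ := g.step_attr σ v k hA hT
  have hS := g.S2_succ σ v k
  by_cases hres : g.TZ g.Zset (g.play σ g.tauStar v (k+1))
      ((g.S2 σ v k).2.1 + g.w (g.S2 σ v k).1 (g.play σ g.tauStar v (k+1)) - (g.S2 σ v k).2.2)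
  · exfalso
    have hbnew : (g.S2 σ v (k+1)).2.2 =
        (g.S2 σ v k).2.1 + g.w (g.S2 σ v k).1 (g.play σ g.tauStar v (k+1)) := by
      rw [hS, if_pos hres]
    have := hres.2
    omega
  · have hc' : g.c2 σ v (k+1) =
        g.c2 σ v k + g.w (g.play σ g.tauStar v k) (g.play σ g.tauStar v (k+1)) := by
      rw [c2, hS, if_neg hres, c2]
      dsimp only
      rw [S2_fst]
      ring
    have h2 : g.inAttr (g.TZ g.Zset) (g.play σ g.tauStar v (k+1)) (g.c2 σ v (k+1)) := by
      rw [hc']; exact h'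
    rw [g.rnk_eq h2, g.rnk_eq hA]
    rw [g.rank_congr rfl hc' h2 h']
    exact hlt

lemma rnk_lt_Nst' (σ : g.Strategy) {v : V} (hv : v ∈ g.Zset) (k : ℕ) :
    g.rnk (g.play σ g.tauStar v k) (g.c2 σ v k) < g.Nst := by
  obtain ⟨hA, _, hrk, _⟩ := g.main2 σ hv k
  rw [g.rnk_eq hA]
  exact hrk

/-- in every window of `Nst` steps, the base payoff drops by at least one. -/
lemma b_drop (σ : g.Strategy) {v : V} (hv : v ∈ g.Zset) (k : ℕ) :
    (g.S2 σ v (k + g.Nst)).2.2 ≤ (g.S2 σ v k).2.2 - 1 := by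
  by_contra hcon
  push_neg at hcon
  have hBeq : ∀ i ≤ g.Nst, (g.S2 σ v (k + i)).2.2 = (g.S2 σ v k).2.2 := by
    intro i hi
    have h1 : (g.S2 σ v (k + i)).2.2 ≤ (g.S2 σ v k).2.2 :=
      g.S2_b_mono σ v (Nat.le_add_right _ _)
    have h2 : (g.S2 σ v (k + g.Nst)).2.2 ≤ (g.S2 σ v (k+i)).2.2 :=
      g.S2_b_mono σ v (by omega)
    omega
  have hdec : ∀ i ≤ g.Nst,
      g.rnk (g.play σ g.tauStar v (k + i)) (g.c2 σ v (k + i)) + i ≤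
        g.rnk (g.play σ g.tauStar v k) (g.c2 σ v k) := by
    intro i hi
    induction i with
    | zero => simp
    | succ i ih =>
        have hstep : g.rnk (g.play σ g.tauStar v (k + i + 1)) (g.c2 σ v (k + i + 1)) <
            g.rnk (g.play σ g.tauStar v (k + i)) (g.c2 σ v (k + i)) := by
          apply g.rnk_step σ hv (k + i)
          have e1 := hBeq (i+1) hi
          have e2 := hBeq i (by omega)
          rw [show k + (i+1) = k + i + 1 by omega] at e1
          omega
        have := ih (by omega)
        rw [show k + (i+1) = k + i + 1 by omega]
        omega
  have h1 := hdec g.Nst le_rfl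
  have h2 := g.rnk_lt_Nst' σ hv k
  omega

lemma b_le_neg (σ : g.Strategy) {v : V} (hv : v ∈ g.Zset) (j : ℕ) :
    (g.S2 σ v (j * g.Nst)).2.2 ≤ -(j : ℤ) := by
  induction j with
  | zero => rw [Nat.zero_mul, S2_zero]; simp
  | succ j ih =>
      have := g.b_drop σ hv (j * g.Nst)
      rw [show j * g.Nst + g.Nst = (j+1) * g.Nst by ring] at this
      push_cast
      omega

lemma c2_le (σ : g.Strategy) {v : V} (hv : v ∈ g.Zset) (k : ℕ) :
    g.c2 σ v k ≤ (g.Wb : ℤ) * ((g.Nst : ℤ) - 1) := by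
  obtain ⟨hA, _, _, hbd⟩ := g.main2 σ hv k
  have hW : (0:ℤ) ≤ (g.Wb:ℤ) := Int.natCast_nonneg _
  have hr : (0:ℤ) ≤ (g.rank hA : ℤ) := Int.natCast_nonneg _
  nlinarith

lemma TP_le (σ : g.Strategy) {v : V} (hv : v ∈ g.Zset) (k : ℕ) :
    g.TPfin (g.play σ g.tauStar v) k ≤ -((k / g.Nst : ℕ) : ℤ) + (g.Wb : ℤ) * ((g.Nst : ℤ) - 1) := by
  have h1 : g.TPfin (g.play σ g.tauStar v) k = (g.S2 σ v k).2.2 + g.c2 σ v k := by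
    rw [c2, S2_t]; ring
  have h2 : (g.S2 σ v k).2.2 ≤ -((k / g.Nst : ℕ) : ℤ) := by
    have hmul : (k / g.Nst) * g.Nst ≤ k := Nat.div_mul_le_self k g.Nst
    calc (g.S2 σ v k).2.2 ≤ (g.S2 σ v ((k / g.Nst) * g.Nst)).2.2 := g.S2_b_mono σ v hmul
      _ ≤ -((k / g.Nst : ℕ) : ℤ) := g.b_le_neg σ hv _
  have h3 := g.c2_le σ hv k
  omega

end Game
namespace Game

open Classical Filter

variable {V : Type} (g : Game V) [Fintype V]

lemma MP_le (σ : g.Strategy) {v : V} (hv : v ∈ g.Zset) :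
    g.MP (g.play σ g.tauStar v) ≤ ((-(1/(2*(g.Nst : ℝ))) : ℝ) : EReal) := by
  set π := g.play σ g.tauStar v with hπ
  set N : ℝ := (g.Nst : ℝ) with hN
  set W : ℝ := (g.Wb : ℝ) with hW
  have hNpos : (0:ℝ) < N := by
    rw [hN]
    exact_mod_cast g.Nst_pos
  have hWpos : (0:ℝ) ≤ W := by rw [hW]; positivity
  set A : ℝ := 1 + W * N with hA
  have hApos : (0:ℝ) < A := by rw [hA]; nlinarith
  obtain ⟨K0, hK0⟩ := exists_nat_ge (2 * N * A)
  have hK : ∀ k : ℕ, K0 + 1 ≤ k →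
      ((((g.TPfin π k : ℤ) : ℝ) : EReal) / (((k : ℝ)) : EReal)) ≤ ((-(1/(2*N)) : ℝ) : EReal) := by
    intro k hk
    have hk1 : 1 ≤ k := by omega
    have hkR : (0:ℝ) < (k : ℝ) := by exact_mod_cast hk1
    have hkA : 2 * N * A ≤ (k : ℝ) := by
      calc 2 * N * A ≤ (K0 : ℝ) := hK0
        _ ≤ (k : ℝ) := by exact_mod_cast by omega
    rw [← EReal.coe_div, EReal.coe_le_coe_iff]
    -- integer bound
    have hint := g.TP_le σ hv k
    have hq : ((k / g.Nst : ℕ) : ℝ) > (k : ℝ) / N - 1 := by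
      have h1 : k < k / g.Nst * g.Nst + g.Nst := Nat.lt_div_mul_add g.Nst_pos
      have h2 : (k:ℝ) < ((k / g.Nst : ℕ) : ℝ) * N + N := by
        rw [hN]
        exact_mod_cast h1
      rw [gt_iff_lt, sub_lt_iff_lt_add, div_lt_iff₀ hNpos]
      nlinarith
    have h3 : ((g.TPfin π k : ℤ) : ℝ) ≤ -((k / g.Nst : ℕ) : ℝ) + W * (N - 1) := by
      rw [hN, hW]
      exact_mod_cast hint
    have h4 : ((g.TPfin π k : ℤ) : ℝ) ≤ -(k:ℝ)/N + A := by
      rw [hA]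
      have : W * (N - 1) ≤ W * N := by nlinarith
      have hd : -((k / g.Nst : ℕ) : ℝ) ≤ -((k : ℝ) / N - 1) := by linarith
      calc ((g.TPfin π k : ℤ) : ℝ) ≤ -((k / g.Nst : ℕ) : ℝ) + W * (N - 1) := h3
        _ ≤ -((k : ℝ) / N - 1) + W * N := by linarith
        _ = -(k:ℝ)/N + (1 + W * N) := by ring
    -- divide by k
    rw [div_le_iff₀ hkR]
    have hgoal : -(k:ℝ)/N + A ≤ -(1/(2*N)) * (k:ℝ) := by
      have hAk : A ≤ (k:ℝ)/(2*N) := by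
        rw [le_div_iff₀ (by positivity)]
        nlinarith
      have heq : -(1/(2*N)) * (k:ℝ) = -(k:ℝ)/N + (k:ℝ)/(2*N) := by
        field_simp
        ring
      rw [heq]
      linarith
    linarith
  have hev : ∀ᶠ k in (atTop : Filter ℕ),
      ((((g.TPfin π k : ℤ) : ℝ) : EReal) / (((k : ℝ)) : EReal)) ≤ ((-(1/(2*N)) : ℝ) : EReal) :=
    eventually_atTop.mpr ⟨K0 + 1, hK⟩
  calc g.MP π ≤ liminf (fun _ : ℕ => ((-(1/(2*N)) : ℝ) : EReal)) atTop := by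
        rw [MP]
        exact liminf_le_liminf hev
    _ = ((-(1/(2*N)) : ℝ) : EReal) := liminf_const _

lemma B2final {v : V} (hv : v ∈ g.Zset) : g.lowerVal g.MP v < 0 := by
  have hle : g.lowerVal g.MP v ≤ ((-(1/(2*(g.Nst : ℝ))) : ℝ) : EReal) := by
    apply iSup_le
    intro σ
    exact le_trans (iInf_le _ g.tauStar) (g.MP_le σ hv)
  refine lt_of_le_of_lt hle ?_
  rw [EReal.coe_neg']
  have hNpos : (0:ℝ) < (g.Nst : ℝ) := by exact_mod_cast g.Nst_pos
  have : (0:ℝ) < 1/(2*(g.Nst : ℝ)) := by positivity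
  linarith

end Game
namespace Game

open Classical

variable {V : Type} (g : Game V) [Fintype V]

open Classical in
/-- bookkeeping for Max: current vertex, total payoff, current level, payoff at the
start of the current level-phase. -/
noncomputable def proc1 (x : V) (l : List V) : V × ℤ × ℕ × ℤ :=
  l.foldl (fun s y =>
    if y ∈ g.Yc s.2.2.1 then (y, s.2.1 + g.w s.1 y, s.2.2.1, s.2.2.2)
    else (y, s.2.1 + g.w s.1 y, g.lvl y, s.2.1 + g.w s.1 y)) (x, 0, g.lvl x, 0)

open Classical in
lemma proc1_append (x : V) (l : List V) (y : V) :
    g.proc1 x (l ++ [y]) =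
      (if y ∈ g.Yc (g.proc1 x l).2.2.1
       then (y, (g.proc1 x l).2.1 + g.w (g.proc1 x l).1 y, (g.proc1 x l).2.2.1,
             (g.proc1 x l).2.2.2)
       else (y, (g.proc1 x l).2.1 + g.w (g.proc1 x l).1 y, g.lvl y,
             (g.proc1 x l).2.1 + g.w (g.proc1 x l).1 y)) := by
  simp [proc1, List.foldl_append]

noncomputable def proc1L (u : V) (l : List V) : V × ℤ × ℕ × ℤ :=
  match l with
  | [] => (u, 0, g.lvl u, 0)
  | x :: r => g.proc1 x r

open Classical in
/-- Max's strategy: stay outside the attractors of the current level. -/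
noncomputable def sigmaStar : g.Strategy where
  next h u :=
    let s := g.proc1L u (h.reverse ++ [u])
    if hex : ∃ u', g.E u u' ∧
        ¬ g.inAttr (g.TZ (g.Yc s.2.2.1)) u' (s.2.1 - s.2.2.2 + g.w u u')
    then Classical.choose hex
    else g.someSucc u
  valid h u := by
    dsimp only
    split
    · next hex => exact (Classical.choose_spec hex).1
    · exact g.someSucc_spec u

/-- state along a play against `sigmaStar` -/
noncomputable def S1 (v : V) (π : ℕ → V) (k : ℕ) : V × ℤ × ℕ × ℤ :=
  g.proc1 v (ptl π k)

lemma S1_zero (v : V) (π : ℕ → V) : g.S1 v π 0 = (v, 0, g.lvl v, 0) := by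
  simp [S1, ptl, proc1]

open Classical in
lemma S1_succ (v : V) (π : ℕ → V) (k : ℕ) :
    g.S1 v π (k+1) =
      (if π (k+1) ∈ g.Yc (g.S1 v π k).2.2.1
       then (π (k+1), (g.S1 v π k).2.1 + g.w (g.S1 v π k).1 (π (k+1)), (g.S1 v π k).2.2.1,
             (g.S1 v π k).2.2.2)
       else (π (k+1), (g.S1 v π k).2.1 + g.w (g.S1 v π k).1 (π (k+1)), g.lvl (π (k+1)),
             (g.S1 v π k).2.1 + g.w (g.S1 v π k).1 (π (k+1)))) := by
  rw [S1, ptl_succ, proc1_append]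
  rfl

lemma S1_fst (v : V) (π : ℕ → V) (h0 : π 0 = v) (k : ℕ) : (g.S1 v π k).1 = π k := by
  induction k with
  | zero => rw [S1_zero, ← h0]
  | succ k _ => rw [S1_succ]; split <;> rfl

lemma S1_t (v : V) (π : ℕ → V) (h0 : π 0 = v) (k : ℕ) :
    (g.S1 v π k).2.1 = g.TPfin π k := by
  induction k with
  | zero => rw [S1_zero, TPfin_zero]
  | succ k ih =>
      rw [TPfin_succ, ← ih, ← g.S1_fst v π h0 k, S1_succ]
      split <;> rfl

/-- the invariant for part B1 -/
def Qinv (v : V) (u : V) (t : ℤ) (ℓ : ℕ) (b : ℤ) : Prop :=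
  u ∈ g.Yc ℓ ∧ ¬ g.inAttr (g.TZ (g.Yc ℓ)) u (t - b) ∧ ℓ ≤ g.lvl v ∧
    -(((g.lvl v : ℤ) - (ℓ : ℤ)) * (g.Wb : ℤ)) ≤ b

lemma Qinv_c_nonneg {v u : V} {t : ℤ} {ℓ : ℕ} {b : ℤ} (h : g.Qinv v u t ℓ b) : 0 ≤ t - b := by
  obtain ⟨hmem, hNA, _, _⟩ := h
  have := g.not_T_of_not_inAttr hNA
  rw [TZ] at this
  by_contra hc
  exact this ⟨hmem, by omega⟩

lemma B1main (v : V) (hv : v ∉ g.Zset) (π : ℕ → V) (k : ℕ) (h0 : π 0 = v)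
    (hE : ∀ j < k, g.E (π j) (π (j+1)))
    (hconf : ∀ j < k, g.owner (π j) = true → π (j+1) = (g.sigmaStar).next (hist π j) (π j)) :
    g.Qinv v (π k) (g.S1 v π k).2.1 (g.S1 v π k).2.2.1 (g.S1 v π k).2.2.2 := by
  induction k with
  | zero =>
      rw [S1_zero]
      refine ⟨?_, ?_, le_rfl, ?_⟩
      · rw [h0]; exact g.lvl_mem v
      · rw [h0]
        show ¬ g.inAttr (g.TZ (g.Yc (g.lvl v))) v (0 - 0)
        rw [show (0:ℤ) - 0 = 0 by ring]
        exact g.not_mem_phi_lvl hv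
      · dsimp only
        omega
  | succ k ih =>
      have hEk : ∀ j < k, g.E (π j) (π (j+1)) := fun j hj => hE j (by omega)
      have hconfk : ∀ j < k, g.owner (π j) = true →
          π (j+1) = (g.sigmaStar).next (hist π j) (π j) := fun j hj => hconf j (by omega)
      obtain ⟨hmem, hNA, hll, hbb⟩ := ih hEk hconfk
      have hc0 : (0:ℤ) ≤ (g.S1 v π k).2.1 - (g.S1 v π k).2.2.2 :=
        g.Qinv_c_nonneg (ih hEk hconfk)
      -- the next configuration stays outside the attractor of the current level
      have hNA' : ¬ g.inAttr (g.TZ (g.Yc (g.S1 v π k).2.2.1)) (π (k+1))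
          ((g.S1 v π k).2.1 - (g.S1 v π k).2.2.2 + g.w (π k) (π (k+1))) := by
        rcases Bool.eq_false_or_eq_true (g.owner (π k)) with ho | ho
        · -- Max's move, prescribed by sigmaStar
          have hstep := hconf k (by omega) ho
          have hfwd : (hist π k).reverse ++ [π k] = v :: ptl π k := by
            rw [hist_forward, h0]
          have hproc : g.proc1L (π k) ((hist π k).reverse ++ [π k]) = g.S1 v π k := by
            rw [hfwd]; rfl
          have hex : ∃ u', g.E (π k) u' ∧
              ¬ g.inAttr (g.TZ (g.Yc (g.S1 v π k).2.2.1)) u'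
                ((g.S1 v π k).2.1 - (g.S1 v π k).2.2.2 + g.w (π k) u') :=
            g.not_inAttr_max ho hNA
          have hnext : π (k+1) = Classical.choose hex := by
            rw [hstep]
            show (g.sigmaStar).next (hist π k) (π k) = _
            unfold sigmaStar
            dsimp only
            simp only [hproc]
            rw [dif_pos hex]
          rw [hnext]
          exact (Classical.choose_spec hex).2
        · -- Min's move: any successor stays outside
          exact g.not_inAttr_min ho hNA (π (k+1)) (hE k (by omega))
      have hS := g.S1_succ v π k
      have hfst : (g.S1 v π k).1 = π k := g.S1_fst v π h0 k
      by_cases hswitch : π (k+1) ∈ g.Yc (g.S1 v π k).2.2.1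
      · -- no switch
        rw [hS, if_pos hswitch]
        refine ⟨hswitch, ?_, hll, hbb⟩
        dsimp only
        rw [hfst]
        have : (g.S1 v π k).2.1 + g.w (π k) (π (k+1)) - (g.S1 v π k).2.2.2 =
            (g.S1 v π k).2.1 - (g.S1 v π k).2.2.2 + g.w (π k) (π (k+1)) := by ring
        rw [this]
        exact hNA'
      · -- switch to a lower level
        rw [hS, if_neg hswitch]
        have hyz : π (k+1) ∉ g.Zset := g.not_Zset_of_not_Yc hswitch
        have hlt : g.lvl (π (k+1)) < (g.S1 v π k).2.2.1 := g.lvl_lt_of_not_mem hswitch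
        refine ⟨g.lvl_mem _, ?_, by dsimp only; omega, ?_⟩
        · dsimp only
          rw [show (g.S1 v π k).2.1 + g.w (g.S1 v π k).1 (π (k+1)) -
              ((g.S1 v π k).2.1 + g.w (g.S1 v π k).1 (π (k+1))) = 0 by ring]
          exact g.not_mem_phi_lvl hyz
        · dsimp only
          rw [hfst]
          have hw := g.neg_Wb_le_w (π k) (π (k+1))
          have hWnn : (0:ℤ) ≤ (g.Wb : ℤ) := Int.natCast_nonneg _
          have hcast : (g.lvl (π (k+1)) : ℤ) + 1 ≤ ((g.S1 v π k).2.2.1 : ℤ) := by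
            exact_mod_cast hlt
          have hcast2 : ((g.S1 v π k).2.2.1 : ℤ) ≤ (g.lvl v : ℤ) := by exact_mod_cast hll
          nlinarith
  
lemma B1_TP (v : V) (hv : v ∉ g.Zset) (π : ℕ → V) (k : ℕ) (h0 : π 0 = v)
    (hE : ∀ j < k, g.E (π j) (π (j+1)))
    (hconf : ∀ j < k, g.owner (π j) = true → π (j+1) = (g.sigmaStar).next (hist π j) (π j)) :
    -((g.lvl v : ℤ) * (g.Wb : ℤ)) ≤ g.TPfin π k := by
  have h := g.B1main v hv π k h0 hE hconf
  have ht := g.S1_t v π h0 k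
  obtain ⟨hmem, hNA, hll, hbb⟩ := h
  have hc0 := g.Qinv_c_nonneg (g.B1main v hv π k h0 hE hconf)
  have hWnn : (0:ℤ) ≤ (g.Wb : ℤ) := Int.natCast_nonneg _
  have hl0 : (0:ℤ) ≤ ((g.S1 v π k).2.2.1 : ℤ) := Int.natCast_nonneg _
  nlinarith [hbb, hc0, ht]

end Game
namespace Game

open Classical

variable {V : Type} (g : Game V)

/-- lift of a Max strategy to the MCR game -/
noncomputable def liftMax (σ : g.Strategy) : (mcrOf g).toGame.Strategy where
  next h x :=
    match x with
    | none => none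
    | some u => some (σ.next (h.filterMap id) u)
  valid h x := by
    match x with
    | none => exact rfl
    | some u => exact σ.valid (h.filterMap id) u

lemma filterMap_map_some (l : List V) : (l.map some).filterMap id = l := by
  induction l with
  | nil => rfl
  | cons a l ih => simp [ih]

lemma hist_map_some (π' : ℕ → Option V) (ρ : ℕ → V) (j : ℕ)
    (hsome : ∀ i < j, π' i = some (ρ i)) :
    hist π' j = (hist ρ j).map some := by
  unfold hist
  rw [List.map_reverse]
  congr 1
  rw [List.map_ofFn]
  congr 1
  funext i
  exact hsome i i.isLt

variable [Fintype V]

lemma MCR_lift_bound (v : V) (hv : v ∉ g.Zset) (τ' : (mcrOf g).toGame.Strategy) :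
    ((((-((g.lvl v : ℤ) * (g.Wb : ℤ))) : ℤ) : ℝ) : EReal) ≤
      (mcrOf g).toGame.MCR (mcrOf g).t
        ((mcrOf g).toGame.play (g.liftMax g.sigmaStar) τ' (some v)) := by
  set π' := (mcrOf g).toGame.play (g.liftMax g.sigmaStar) τ' (some v) with hπ'
  unfold MCR
  split
  case isFalse => exact le_top
  case isTrue h =>
    have hfind : π' (Nat.find h) = none := Nat.find_spec h
    have h0' : π' 0 = some v := rfl
    have hKpos : Nat.find h ≠ 0 := by
      intro hc
      rw [hc, h0'] at hfind
      exact Option.some_ne_none v hfind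
    obtain ⟨m, hm⟩ : ∃ m, Nat.find h = m + 1 := ⟨Nat.find h - 1, by omega⟩
    set ρ : ℕ → V := fun j => (π' j).getD v with hρ
    have hsome : ∀ j < Nat.find h, π' j = some (ρ j) := by
      intro j hj
      have hne : π' j ≠ none := Nat.find_min h hj
      show π' j = some ((π' j).getD v)
      rcases hx : π' j with _ | u
      · exact absurd hx hne
      · rfl
    have h0 : ρ 0 = v := by
      show (π' 0).getD v = v
      rw [h0']
      rfl
    have hE : ∀ j < m, g.E (ρ j) (ρ (j+1)) := by
      intro j hj
      have he := (mcrOf g).toGame.play_edge (g.liftMax g.sigmaStar) τ' (some v) j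
      rw [← hπ'] at he
      rw [hsome j (by omega), hsome (j+1) (by omega)] at he
      exact he
    have hconf : ∀ j < m, g.owner (ρ j) = true →
        ρ (j+1) = (g.sigmaStar).next (hist ρ j) (ρ j) := by
      intro j hj ho
      have ho' : (mcrOf g).toGame.owner (π' j) = true := by
        rw [hsome j (by omega)]
        exact ho
      have hstep := (mcrOf g).toGame.play_max (g.liftMax g.sigmaStar) τ' (some v) j ho'
      rw [← hπ'] at hstep
      rw [hsome (j+1) (by omega), hsome j (by omega)] at hstep
      have hh : hist π' j = (hist ρ j).map some :=
        hist_map_some π' ρ j (fun i hi => hsome i (by omega))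
      rw [hh] at hstep
      have hnx : (g.liftMax g.sigmaStar).next ((hist ρ j).map some) (some (ρ j)) =
          some ((g.sigmaStar).next (((hist ρ j).map some).filterMap id) (ρ j)) := rfl
      rw [hnx, filterMap_map_some] at hstep
      exact Option.some_injective V hstep
    have hTP : ∀ j, j ≤ m → (mcrOf g).toGame.TPfin π' j = g.TPfin ρ j := by
      intro j
      induction j with
      | zero => intro _; rw [TPfin_zero, TPfin_zero]
      | succ i ih =>
          intro hij
          rw [TPfin_succ, TPfin_succ, ih (by omega)]
          have hw : (mcrOf g).toGame.w (π' i) (π' (i+1)) = g.w (ρ i) (ρ (i+1)) := by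
            rw [hsome i (by omega), hsome (i+1) (by omega)]
            rfl
          rw [hw]
    have hlast : (mcrOf g).toGame.TPfin π' (Nat.find h) = g.TPfin ρ m := by
      rw [hm, TPfin_succ, hTP m le_rfl]
      have hw0 : (mcrOf g).toGame.w (π' m) (π' (m+1)) = 0 := by
        rw [hsome m (by omega), ← hm, hfind]
        rfl
      rw [hw0, add_zero]
    have hbd := g.B1_TP v hv ρ m h0 hE hconf
    have hirr : ∀ (i1 i2 : DecidablePred fun n => π' n = (mcrOf g).t),
        @Nat.find _ i1 h = @Nat.find _ i2 h := by
      intro i1 i2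
      congr!
    rw [hirr (fun a => Classical.propDecidable (π' a = (mcrOf g).t)) inferInstance]
    rw [EReal.coe_le_coe_iff]
    have hfin : -((g.lvl v : ℤ) * (g.Wb : ℤ)) ≤ (mcrOf g).toGame.TPfin π' (Nat.find h) := by
      linarith [hlast, hbd]
    exact_mod_cast hfin

lemma B1final (v : V) (hv : v ∉ g.Zset) :
    ((((-((g.lvl v : ℤ) * (g.Wb : ℤ))) : ℤ) : ℝ) : EReal) ≤ (mcrOf g).Val (some v) := by
  unfold MCRGame.Val lowerVal
  refine le_trans ?_ (le_iSup _ (g.liftMax g.sigmaStar))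
  unfold valMax
  exact le_iInf fun τ' => g.MCR_lift_bound v hv τ'

end Game
namespace Game

open Classical Filter

variable {V : Type} (g : Game V)

lemma hist_length (π : ℕ → V) (k : ℕ) : (hist π k).length = k := by
  simp [hist]

/-- restriction of a Max strategy of the MCR game to the original game -/
noncomputable def stripMax (σ' : (mcrOf g).toGame.Strategy) : g.Strategy where
  next h u :=
    match σ'.next (h.map some) (some u) with
    | some u' => u'
    | none => g.someSucc u
  valid h u := by
    have hv := σ'.valid (h.map some) (some u)
    cases hcase : σ'.next (h.map some) (some u) with
    | none => simp only [hcase]; exact g.someSucc_spec u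
    | some u' =>
        simp only [hcase]
        rw [hcase] at hv
        exact hv

lemma stripMax_max (σ' : (mcrOf g).toGame.Strategy) (h : List V) (u : V)
    (ho : g.owner u = true) :
    σ'.next (h.map some) (some u) = some ((g.stripMax σ').next h u) := by
  have hv := σ'.valid (h.map some) (some u)
  cases hcase : σ'.next (h.map some) (some u) with
  | none =>
      rw [hcase] at hv
      have : g.owner u = false := hv
      rw [ho] at this
      exact absurd this (by simp)
  | some u' =>
      show _ = some ((g.stripMax σ').next h u)
      unfold stripMax
      dsimp only
      simp only [hcase]

/-- Min's strategy in the MCR game: follow `τ`, but jump to the target at time `k₀`. -/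
noncomputable def jumpMin (τ : g.Strategy) (k₀ : ℕ) : (mcrOf g).toGame.Strategy where
  next h x :=
    match x with
    | none => none
    | some u =>
        if h.length = k₀ ∧ g.owner u = false then none
        else some (τ.next (h.filterMap id) u)
  valid h x := by
    match x with
    | none => exact rfl
    | some u =>
        dsimp only
        split
        · next hcond => exact hcond.2
        · exact τ.valid (h.filterMap id) u

/-- the play correspondence for the forward direction -/
lemma jump_corr (σ' : (mcrOf g).toGame.Strategy) (τ : g.Strategy) (v : V) (k₀ : ℕ) :
    ∀ k ≤ k₀, ∀ j ≤ k,
      (mcrOf g).toGame.play σ' (g.jumpMin τ k₀) (some v) j =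
        some (g.play (g.stripMax σ') τ v j) := by
  intro k
  induction k with
  | zero =>
      intro _ j hj
      rw [Nat.le_zero.mp hj]
      rfl
  | succ k ih =>
      intro hk j hj
      rcases Nat.lt_or_ge j (k+1) with hj' | hj'
      · exact ih (by omega) j (by omega)
      · have hjeq : j = k + 1 := by omega
        subst hjeq
        have ihk : ∀ i ≤ k,
            (mcrOf g).toGame.play σ' (g.jumpMin τ k₀) (some v) i =
              some (g.play (g.stripMax σ') τ v i) := fun i hi => ih (by omega) i hi
        set π' := (mcrOf g).toGame.play σ' (g.jumpMin τ k₀) (some v) with hπ'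
        set π := g.play (g.stripMax σ') τ v with hπ
        have hh : hist π' k = (hist π k).map some :=
          hist_map_some π' π k (fun i hi => ihk i (by omega))
        rcases Bool.eq_false_or_eq_true (g.owner (π k)) with ho | ho
        · -- Max's move
          have ho' : (mcrOf g).toGame.owner (π' k) = true := by
            rw [ihk k le_rfl]
            exact ho
          have hstep := (mcrOf g).toGame.play_max σ' (g.jumpMin τ k₀) (some v) k ho'
          rw [← hπ'] at hstep
          rw [hstep, ihk k le_rfl, hh, g.stripMax_max σ' (hist π k) (π k) ho]
          have hgstep : π (k+1) = (g.stripMax σ').next (hist π k) (π k) :=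
            g.play_max (g.stripMax σ') τ v k ho
          rw [hgstep]
        · -- Min's move
          have ho' : (mcrOf g).toGame.owner (π' k) = false := by
            rw [ihk k le_rfl]
            exact ho
          have hstep := (mcrOf g).toGame.play_min σ' (g.jumpMin τ k₀) (some v) k ho'
          rw [← hπ'] at hstep
          rw [hstep, ihk k le_rfl]
          have hnx : (g.jumpMin τ k₀).next (hist π' k) (some (π k)) =
              if (hist π' k).length = k₀ ∧ g.owner (π k) = false then none
              else some (τ.next ((hist π' k).filterMap id) (π k)) := rfl
          rw [hnx, if_neg, hh, filterMap_map_some]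
          · have hgstep : π (k+1) = τ.next (hist π k) (π k) :=
              g.play_min (g.stripMax σ') τ v k ho
            rw [hgstep]
          · rw [hh]
            intro hcon
            have hlen : ((hist π k).map some).length = k := by
              rw [List.length_map, hist_length]
            rw [hlen] at hcon
            omega

end Game
namespace Game

open Classical Filter

variable {V : Type} (g : Game V)

lemma MCR_eq (π : ℕ → Option V) (K : ℕ) (hK : π K = (mcrOf g).t)
    (hmin : ∀ j < K, π j ≠ (mcrOf g).t) :
    (mcrOf g).toGame.MCR (mcrOf g).t π = (((mcrOf g).toGame.TPfin π K : ℤ) : ℝ) := by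
  unfold MCR
  rw [dif_pos ⟨K, hK⟩]
  congr 2
  congr 1
  have hgen : ∀ (i : DecidablePred fun n => π n = (mcrOf g).t)
      (hex : ∃ k, π k = (mcrOf g).t), @Nat.find _ i hex = K := by
    intro i hex
    rw [Nat.find_eq_iff]
    exact ⟨hK, hmin⟩
  exact hgen _ _

variable [Fintype V]

/-- from a play with negative mean payoff, extract arbitrarily low total payoffs
at vertices of Min. -/
lemma MP_drops (hbip : ∀ v v', g.E v v' → g.owner v ≠ g.owner v') (π : ℕ → V)
    (hE : ∀ k, g.E (π k) (π (k+1))) (hMP : g.MP π < 0) (n : ℕ) :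
    ∃ k, g.owner (π k) = false ∧ g.TPfin π k ≤ -(n : ℤ) := by
  obtain ⟨c, hc1, hc2⟩ := exists_between hMP
  induction c using EReal.rec with
  | bot => exact absurd hc1 (not_lt_bot)
  | top => exact absurd hc2 (not_lt.mpr le_top)
  | coe r =>
    have hr : r < 0 := by
      have := hc2
      exact EReal.coe_neg'.mp this
    have hfreq : ∃ᶠ k in (atTop : Filter ℕ),
        ((((g.TPfin π k : ℤ) : ℝ) : EReal) / (((k : ℝ)) : EReal)) < ((r : ℝ) : EReal) := by
      exact Filter.frequently_lt_of_liminf_lt (u := fun k =>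
        ((((g.TPfin π k : ℤ) : ℝ) : EReal) / (((k : ℝ)) : EReal))) (h := hc1)
    -- choose a sufficiently late good index
    obtain ⟨K0, hK0⟩ := exists_nat_ge (((n : ℝ) + (g.Wb : ℝ) + 1) / (-r))
    obtain ⟨k, hk, hklt⟩ := (Filter.frequently_atTop.mp hfreq) (K0 + 1)
    rw [← EReal.coe_div, EReal.coe_lt_coe_iff] at hklt
    have hk1 : (1:ℝ) ≤ (k:ℝ) := by exact_mod_cast Nat.one_le_iff_ne_zero.mpr (by omega)
    have hkpos : (0:ℝ) < (k:ℝ) := by linarith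
    have hTP : ((g.TPfin π k : ℤ) : ℝ) < r * k := by
      rw [div_lt_iff₀ hkpos] at hklt
      exact hklt
    have hrk : r * k ≤ -((n : ℝ) + (g.Wb : ℝ) + 1) := by
      have hK0k : (((n : ℝ) + (g.Wb : ℝ) + 1) / (-r)) ≤ (k : ℝ) := by
        calc (((n : ℝ) + (g.Wb : ℝ) + 1) / (-r)) ≤ (K0 : ℝ) := hK0
          _ ≤ (k : ℝ) := by exact_mod_cast by omega
      rw [div_le_iff₀ (by linarith)] at hK0k
      nlinarith
    have hTPk : g.TPfin π k ≤ -((n : ℤ) + (g.Wb : ℤ)) := by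
      have : ((g.TPfin π k : ℤ) : ℝ) ≤ ((-((n : ℤ) + (g.Wb : ℤ)) : ℤ) : ℝ) := by
        push_cast
        nlinarith
      exact_mod_cast this
    rcases Bool.eq_false_or_eq_true (g.owner (π k)) with ho | ho
    case inr => exact ⟨k, ho, by have := Int.natCast_nonneg g.Wb; omega⟩
    case inl =>
      have hne := hbip (π k) (π (k+1)) (hE k)
      have ho' : g.owner (π (k+1)) = false := by
        rw [ho] at hne
        cases hcase : g.owner (π (k+1)) with
        | false => rfl
        | true => exact absurd hcase.symm hne
      refine ⟨k+1, ho', ?_⟩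
      rw [TPfin_succ]
      have hw := g.w_le_Wb' (π k) (π (k+1))
      omega

end Game
namespace Game

open Classical Filter

variable {V : Type} (g : Game V)

lemma TPfin_map_some (π' : ℕ → Option V) (ρ : ℕ → V) (m : ℕ)
    (hsome : ∀ j ≤ m, π' j = some (ρ j)) :
    (mcrOf g).toGame.TPfin π' m = g.TPfin ρ m := by
  induction m with
  | zero => rw [TPfin_zero, TPfin_zero]
  | succ i ih =>
      rw [TPfin_succ, TPfin_succ, ih (fun j hj => hsome j (by omega))]
      have hw : (mcrOf g).toGame.w (π' i) (π' (i+1)) = g.w (ρ i) (ρ (i+1)) := by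
        rw [hsome i (by omega), hsome (i+1) (by omega)]
        rfl
      rw [hw]

variable [Fintype V]

lemma forward (hbip : ∀ v v', g.E v v' → g.owner v ≠ g.owner v') (v : V)
    (h : g.lowerVal g.MP v < 0) : (mcrOf g).Val (some v) = ⊥ := by
  unfold MCRGame.Val lowerVal
  rw [iSup_eq_bot]
  intro σ'
  unfold valMax
  rw [iInf_eq_bot]
  intro b hb
  obtain ⟨n, hn⟩ : ∃ n : ℕ, (((-(n:ℤ) : ℤ) : ℝ) : EReal) < b := by
    induction b using EReal.rec with
    | bot => exact absurd hb (lt_irrefl _)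
    | top => exact ⟨0, EReal.coe_lt_top _⟩
    | coe s =>
        obtain ⟨n, hn⟩ := exists_nat_gt (-s)
        refine ⟨n, ?_⟩
        rw [EReal.coe_lt_coe_iff]
        push_cast
        linarith
  have hvm : g.valMax g.MP v (g.stripMax σ') < 0 :=
    lt_of_le_of_lt (le_iSup (g.valMax g.MP v) (g.stripMax σ')) h
  rw [valMax, iInf_lt_iff] at hvm
  obtain ⟨τ, hτ⟩ := hvm
  obtain ⟨k₀, ho, hTP⟩ := g.MP_drops hbip (g.play (g.stripMax σ') τ v)
    (fun k => g.play_edge _ _ _ k) hτ n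
  refine ⟨g.jumpMin τ k₀, ?_⟩
  have hsome : ∀ j ≤ k₀,
      (mcrOf g).toGame.play σ' (g.jumpMin τ k₀) (some v) j =
        some (g.play (g.stripMax σ') τ v j) :=
    fun j hj => g.jump_corr σ' τ v k₀ k₀ le_rfl j hj
  have hnone : (mcrOf g).toGame.play σ' (g.jumpMin τ k₀) (some v) (k₀ + 1) = (mcrOf g).t := by
    have ho' : (mcrOf g).toGame.owner
        ((mcrOf g).toGame.play σ' (g.jumpMin τ k₀) (some v) k₀) = false := by
      rw [hsome k₀ le_rfl]
      exact ho
    have hstep := (mcrOf g).toGame.play_min σ' (g.jumpMin τ k₀) (some v) k₀ ho'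
    rw [hstep, hsome k₀ le_rfl]
    have hnx : (g.jumpMin τ k₀).next
        (hist ((mcrOf g).toGame.play σ' (g.jumpMin τ k₀) (some v)) k₀)
        (some (g.play (g.stripMax σ') τ v k₀)) =
        if (hist ((mcrOf g).toGame.play σ' (g.jumpMin τ k₀) (some v)) k₀).length = k₀ ∧
            g.owner (g.play (g.stripMax σ') τ v k₀) = false then none
        else some (τ.next _ _) := rfl
    rw [hnx, if_pos ⟨hist_length _ _, ho⟩]
    rfl
  have hne : ∀ j < k₀ + 1,
      (mcrOf g).toGame.play σ' (g.jumpMin τ k₀) (some v) j ≠ (mcrOf g).t := by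
    intro j hj
    rw [hsome j (by omega)]
    exact Option.some_ne_none _
  rw [g.MCR_eq _ (k₀+1) hnone hne]
  have hTPeq : (mcrOf g).toGame.TPfin ((mcrOf g).toGame.play σ' (g.jumpMin τ k₀) (some v))
      (k₀+1) = g.TPfin (g.play (g.stripMax σ') τ v) k₀ := by
    rw [TPfin_succ, g.TPfin_map_some _ _ k₀ hsome]
    have hw0 : (mcrOf g).toGame.w
        ((mcrOf g).toGame.play σ' (g.jumpMin τ k₀) (some v) k₀)
        ((mcrOf g).toGame.play σ' (g.jumpMin τ k₀) (some v) (k₀+1)) = 0 := by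
      rw [hsome k₀ le_rfl, hnone]
      rfl
    rw [hw0, add_zero]
  rw [hTPeq]
  refine lt_of_le_of_lt ?_ hn
  rw [EReal.coe_le_coe_iff]
  exact_mod_cast hTP

end Game
/-- for a bipartite mean-payoff game `G`, a vertex has negative
mean-payoff value iff its value in the associated MCR game `G'` is `−∞`. -/
theorem statement_4 {V : Type} [Fintype V] (g : Game V)
    (hbip : ∀ v v', g.E v v' → g.owner v ≠ g.owner v') (v : V) :
    g.lowerVal g.MP v < 0 ↔ (mcrOf g).Val (some v) = ⊥ := by
  constructor
  · exact fun h => g.forward hbip v h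
  · intro h
    by_cases hv : v ∈ g.Zset
    · exact g.B2final hv
    · exfalso
      have hle := g.B1final v hv
      rw [h, le_bot_iff] at hle
      exact EReal.coe_ne_bot _ hle
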